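/- There exist constants C > 0 and δ₀ > 0 depending only on n such that: for every δ ∈ (0, δ₀), every convex body K with (1−δ)B∞ⁿ ⊆ K ⊆ B∞ⁿ, and every nonempty proper face F of B∞ⁿ (with sign vector ε and k = dim F), there exist points x_F ∈ ∂K and x*_F ∈ ∂K*, a real α_F > 0, and vectors h_F, h*_F ∈ ℝⁿ such that x_F = α_F·c_F + h_F, x*_F = α_F⁻¹·c_F/(n−k) + h*_F, ⟨x_F, x*_F⟩ = 1, h_F ∈ {h ∈ ℝⁿ : hᵢ = 0 whenever εᵢ = 0, and Σᵢ εᵢhᵢ = 0}, h*_F ∈ span{eᵢ : εᵢ = 0}, and |α_F − 1| ≤ Cδ, ‖h_F‖ ≤ Cδ, ‖h*_F‖ ≤ Cδ. -/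

import Mathlib

open MeasureTheory RealInnerProductSpace ENNReal Pointwise

noncomputable section

/-- The unit cube `B∞ⁿ = {x : |xᵢ| ≤ 1 ∀ i}`. -/
def cube (n : ℕ) : Set (EuclideanSpace ℝ (Fin n)) := {x | ∀ i, |x i| ≤ 1}

/-- The polar body `K* = {ξ : ⟨x, ξ⟩ ≤ 1 ∀ x ∈ K}`. -/
def polarBody {n : ℕ} (K : Set (EuclideanSpace ℝ (Fin n))) :
    Set (EuclideanSpace ℝ (Fin n)) :=
  {ξ | ∀ x ∈ K, ⟪x, ξ⟫ ≤ 1}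

/-- Nonempty proper faces of the cube `B∞ⁿ`, encoded by nonzero sign vectors
`ε ∈ {−1,0,1}ⁿ`: the face is `{x ∈ B∞ⁿ : xᵢ = εᵢ whenever εᵢ ≠ 0}`. -/
def Face (n : ℕ) : Type := {ε : Fin n → SignType // ε ≠ 0}

instance (n : ℕ) : Fintype (Face n) := Subtype.fintype _

/-- The center `c_F` of the face with sign vector `ε` is `ε` itself (as a real vector). -/
def ctr {n : ℕ} (F : Face n) : EuclideanSpace ℝ (Fin n) := WithLp.toLp 2 fun i => (F.1 i : ℝ)

/-- The dimension of a face: the number of zero coordinates of its sign vector. -/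
def faceDim {n : ℕ} (F : Face n) : ℕ := (Finset.univ.filter fun i => F.1 i = 0).card

namespace Face9Aux

lemma inner_eq {n : ℕ} (x y : EuclideanSpace ℝ (Fin n)) : ⟪x, y⟫ = ∑ i, x i * y i := by
  simp [PiLp.inner_apply, RCLike.inner_apply, conj_trivial, mul_comm]

lemma coord_abs_le_norm {n : ℕ} (x : EuclideanSpace ℝ (Fin n)) (i : Fin n) : |x i| ≤ ‖x‖ := by
  rw [EuclideanSpace.norm_eq, ← Real.sqrt_sq_eq_abs]
  apply Real.sqrt_le_sqrt
  calc x i ^ 2 = ‖x i‖ ^ 2 := by rw [Real.norm_eq_abs, sq_abs]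
    _ ≤ ∑ j, ‖x j‖ ^ 2 :=
        Finset.single_le_sum (f := fun j => ‖x j‖ ^ 2) (fun j _ => by positivity)
          (Finset.mem_univ i)

lemma norm_le_norm_of_coord {n : ℕ} (u v : EuclideanSpace ℝ (Fin n))
    (h : ∀ i, |u i| ≤ |v i|) : ‖u‖ ≤ ‖v‖ := by
  rw [EuclideanSpace.norm_eq, EuclideanSpace.norm_eq]
  apply Real.sqrt_le_sqrt
  apply Finset.sum_le_sum
  intro i _
  rw [Real.norm_eq_abs, Real.norm_eq_abs]
  exact pow_le_pow_left₀ (abs_nonneg _) (h i) 2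

lemma norm_le_of_coord {n : ℕ} (u : EuclideanSpace ℝ (Fin n)) (a : ℝ) (ha : 0 ≤ a)
    (h : ∀ i, |u i| ≤ a) : ‖u‖ ≤ Real.sqrt n * a := by
  rw [EuclideanSpace.norm_eq]
  have h1 : ∑ i, ‖u i‖ ^ 2 ≤ (n:ℝ) * a ^ 2 := by
    calc ∑ i, ‖u i‖ ^ 2 ≤ ∑ _i : Fin n, a ^ 2 := by
          apply Finset.sum_le_sum
          intro i _
          rw [Real.norm_eq_abs]
          exact pow_le_pow_left₀ (abs_nonneg _) (h i) 2
      _ = (n:ℝ) * a ^ 2 := by simp [Finset.sum_const, Finset.card_univ]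
  calc Real.sqrt (∑ i, ‖u i‖ ^ 2) ≤ Real.sqrt ((n:ℝ) * a ^ 2) := Real.sqrt_le_sqrt h1
    _ = Real.sqrt n * a := by
        rw [Real.sqrt_mul (by positivity), Real.sqrt_sq ha]

lemma decomp {n : ℕ} (z : EuclideanSpace ℝ (Fin n)) :
    z = ∑ i, z i • EuclideanSpace.single i (1:ℝ) := by
  simpa [EuclideanSpace.basisFun_apply, EuclideanSpace.basisFun_repr] using
    ((EuclideanSpace.basisFun (Fin n) ℝ).sum_repr z).symm

end Face9Aux

open Face9Aux in
set_option maxHeartbeats 16000000 in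
/-- for every face `F` of the cube there are points
`x_F = α_F·c_F + h_F ∈ ∂K` and `x*_F = α_F⁻¹·c_F/(n−dim F) + h*_F ∈ ∂K*` with
`⟨x_F, x*_F⟩ = 1`, where `h_F` lies in the direction space of the face of `B₁ⁿ` dual
to `F`, `h*_F` lies in the direction space of `F`, and
`|α_F − 1|, ‖h_F‖, ‖h*_F‖ ≤ Cδ`. -/
theorem boundary_points_near_face_centers (n : ℕ) :
    ∃ C : ℝ, 0 < C ∧ ∃ δ₀ : ℝ, 0 < δ₀ ∧
      ∀ δ : ℝ, 0 < δ → δ < δ₀ →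
        ∀ K : Set (EuclideanSpace ℝ (Fin n)),
          Convex ℝ K → IsCompact K → (interior K).Nonempty →
          (1 - δ) • cube n ⊆ K → K ⊆ cube n →
          ∀ F : Face n,
            ∃ xF ∈ frontier K, ∃ xsF ∈ frontier (polarBody K),
              ∃ α : ℝ, 0 < α ∧
                ∃ h hs : EuclideanSpace ℝ (Fin n),
                  xF = α • ctr F + h ∧
                  xsF = α⁻¹ • (((n - faceDim F : ℕ) : ℝ)⁻¹ • ctr F) + hs ∧
                  ⟪xF, xsF⟫ = 1 ∧
                  (∀ i, F.1 i = 0 → h i = 0) ∧ (∑ i, (F.1 i : ℝ) * h i = 0) ∧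
                  (∀ i, F.1 i ≠ 0 → hs i = 0) ∧
                  |α - 1| ≤ C * δ ∧ ‖h‖ ≤ C * δ ∧ ‖hs‖ ≤ C * δ := by
  classical
  refine ⟨((n:ℝ)+2)^2, by positivity, 1/2, by norm_num, ?_⟩
  intro δ hδ0 hδhalf K hKconv hKcomp hKint hKlow hKup F
  set ε := F.1 with hε
  set c : EuclideanSpace ℝ (Fin n) := ctr F with hcdef
  have hcapp : ∀ i, c i = (ε i : ℝ) := fun i => rfl
  have hδ1 : δ < 1 := by linarith
  have hn0 : (0:ℝ) ≤ (n:ℝ) := Nat.cast_nonneg n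
  have h1δ : (0:ℝ) < 1 - δ := by linarith
  -- the number of nonzero coordinates
  set m : ℕ := (Finset.univ.filter fun i => ¬ ε i = 0).card with hmdef
  have hmn : faceDim F + m = n := by
    have := Finset.card_filter_add_card_filter_not
      (s := (Finset.univ : Finset (Fin n))) (p := fun i => ε i = 0)
    simpa [faceDim, hmdef, Finset.card_univ] using this
  have hmlen : m ≤ n := by omega
  have hcast : ((n - faceDim F : ℕ) : ℝ) = (m:ℝ) := by
    have : n - faceDim F = m := by omega
    rw [this]
  have hm1 : 1 ≤ m := by
    rcases Function.ne_iff.mp F.2 with ⟨i, hi⟩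
    refine Finset.card_pos.mpr ⟨i, ?_⟩
    simp only [Finset.mem_filter, Finset.mem_univ, true_and]
    exact hi
  have hm1R : (1:ℝ) ≤ (m:ℝ) := by exact_mod_cast hm1
  have hmpos : (0:ℝ) < (m:ℝ) := by linarith
  -- basic sign facts
  have habs_le : ∀ i, |(ε i : ℝ)| ≤ 1 := by
    intro i; cases h : ε i <;> simp [h]
  have hsq : ∀ i, (ε i : ℝ) * (ε i : ℝ) = if ε i = 0 then 0 else 1 := by
    intro i; cases h : ε i <;> simp [h]
  have hsum_ind : ∑ i, (if ε i = 0 then (0:ℝ) else 1) = (m:ℝ) := by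
    rw [Finset.sum_ite, Finset.sum_const, Finset.sum_const]
    simp [hmdef]
  have hcc : ⟪c, c⟫ = (m:ℝ) := by
    rw [inner_eq, ← hsum_ind]
    exact Finset.sum_congr rfl fun i _ => hsq i
  have hccube : c ∈ cube n := by
    intro i; rw [hcapp]; exact habs_le i
  -- the section K ∩ V and the maximizer x
  have hVclosed : IsClosed {y : EuclideanSpace ℝ (Fin n) | ∀ i, ε i = 0 → y i = 0} := by
    have heq : {y : EuclideanSpace ℝ (Fin n) | ∀ i, ε i = 0 → y i = 0}
        = ⋂ i, ⋂ (_ : ε i = 0), {y : EuclideanSpace ℝ (Fin n) | y i = 0} := by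
      ext y; simp [Set.mem_iInter]
    rw [heq]
    exact isClosed_iInter fun i => isClosed_iInter fun _ =>
      isClosed_eq (EuclideanSpace.proj (𝕜 := ℝ) i).continuous continuous_const
  have hccK : (1-δ) • c ∈ K := hKlow (Set.smul_mem_smul_set hccube)
  have hccV : ∀ i, ε i = 0 → ((1-δ) • c) i = 0 := by
    intro i h; rw [PiLp.smul_apply, hcapp, h]; simp
  have hS0compact : IsCompact (K ∩ {y | ∀ i, ε i = 0 → y i = 0}) :=
    hKcomp.inter_right hVclosed
  have hS0ne : (K ∩ {y | ∀ i, ε i = 0 → y i = 0}).Nonempty := ⟨(1-δ) • c, hccK, hccV⟩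
  have hcont : Continuous fun y : EuclideanSpace ℝ (Fin n) => ⟪y, c⟫ :=
    continuous_id.inner continuous_const
  obtain ⟨x, hxS, hxmax⟩ := hS0compact.exists_isMaxOn hS0ne hcont.continuousOn
  set M : ℝ := ⟪x, c⟫ with hMdef
  have hxK : x ∈ K := hxS.1
  have hxV : ∀ i, ε i = 0 → x i = 0 := hxS.2
  have hxcube : ∀ i, |x i| ≤ 1 := hKup hxK
  have hMle : M ≤ (m:ℝ) := by
    rw [hMdef, inner_eq, ← hsum_ind]
    apply Finset.sum_le_sum
    intro i _
    rw [hcapp]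
    by_cases h : ε i = 0
    · simp [h]
    · simp only [h, if_false]
      calc x i * (ε i : ℝ) ≤ |x i * (ε i : ℝ)| := le_abs_self _
        _ = |x i| * |(ε i : ℝ)| := abs_mul _ _
        _ ≤ 1 * 1 := mul_le_mul (hxcube i) (habs_le i) (abs_nonneg _) zero_le_one
        _ = 1 := one_mul 1
  have hMge : (1-δ) * (m:ℝ) ≤ M := by
    have h := isMaxOn_iff.mp hxmax ((1-δ) • c) ⟨hccK, hccV⟩
    rwa [real_inner_smul_left, hcc] at h
  have hMpos : 0 < M := lt_of_lt_of_le (by nlinarith) hMge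
  -- 0 is an interior point of K
  have hball : Metric.ball (0:EuclideanSpace ℝ (Fin n)) (1-δ) ⊆ (1-δ) • cube n := by
    intro z hz
    have hzn : ‖z‖ < 1 - δ := by simpa [dist_eq_norm] using hz
    refine ⟨(1-δ)⁻¹ • z, ?_, ?_⟩
    · intro i
      rw [PiLp.smul_apply, smul_eq_mul, abs_mul, abs_inv, abs_of_pos h1δ]
      rw [inv_mul_le_iff₀ h1δ, mul_one]
      exact le_trans (coord_abs_le_norm z i) hzn.le
    · show (1-δ) • ((1-δ)⁻¹ • z) = z
      rw [smul_smul, mul_inv_cancel₀ h1δ.ne', one_smul]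
  have h0int : (0:EuclideanSpace ℝ (Fin n)) ∈ interior K :=
    interior_maximal (hball.trans hKlow) Metric.isOpen_ball (Metric.mem_ball_self h1δ)
  -- extension from interior to K
  have hKext : ∀ ξ : EuclideanSpace ℝ (Fin n),
      (∀ y ∈ interior K, ⟪y, ξ⟫ ≤ 1) → ∀ y ∈ K, ⟪y, ξ⟫ ≤ 1 := by
    intro ξ hint y hy
    by_contra hgt
    push_neg at hgt
    set T := ⟪y, ξ⟫ with hT
    have hT1 : 1 < T := hgt
    have hT0 : 0 < T := by linarith
    have hTinv : T⁻¹ < 1 := by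
      rw [inv_lt_one_iff₀]; right; exact hT1
    have hTinv0 : 0 < T⁻¹ := by positivity
    set t := (1 + T⁻¹)/2 with htdef
    have ht0 : 0 ≤ t := by positivity
    have htlt : t < 1 := by rw [htdef]; linarith
    have hmem := hKconv.combo_self_interior_mem_interior hy h0int ht0
      (by linarith : (0:ℝ) < 1 - t) (by ring)
    have hle := hint _ hmem
    rw [smul_zero, add_zero, real_inner_smul_left, ← hT] at hle
    have htgt : T⁻¹ < t := by rw [htdef]; linarith
    have : 1 < t * T := by
      calc 1 = T⁻¹ * T := by rw [inv_mul_cancel₀ hT0.ne']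
        _ < t * T := by exact mul_lt_mul_of_pos_right htgt hT0
    linarith
  -- the open convex set used for separation
  set S : Set (EuclideanSpace ℝ (Fin n) × ℝ) :=
    {p | ∃ y ∈ interior K, (∀ i, ε i = 0 → p.1 i = y i) ∧ p.2 < ⟪y, c⟫ / M} with hSdef
  have hSopen : IsOpen S := by
    rw [Metric.isOpen_iff]
    rintro ⟨z, t⟩ ⟨y, hy, hzy, ht⟩
    replace hzy : ∀ i, ε i = 0 → z i = y i := hzy
    replace ht : t < ⟪y, c⟫ / M := ht
    obtain ⟨r, hr0, hrball⟩ := Metric.isOpen_iff.mp isOpen_interior y hy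
    refine ⟨min r (⟪y, c⟫ / M - t), lt_min hr0 (by linarith), ?_⟩
    rintro ⟨z', t'⟩ hdist
    rw [Metric.mem_ball, Prod.dist_eq] at hdist
    obtain ⟨hdz, hdt⟩ := max_lt_iff.mp hdist
    replace hdz : dist z' z < min r (⟪y, c⟫ / M - t) := hdz
    replace hdt : dist t' t < min r (⟪y, c⟫ / M - t) := hdt
    set w : EuclideanSpace ℝ (Fin n) :=
      (WithLp.toLp 2 fun i => if ε i = 0 then z' i - z i else 0) with hwdef
    have hwapp : ∀ i, w i = if ε i = 0 then z' i - z i else 0 := fun i => rfl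
    have hwle : ‖w‖ ≤ dist z' z := by
      rw [dist_eq_norm]
      apply norm_le_norm_of_coord
      intro i
      rw [hwapp, PiLp.sub_apply]
      split
      · exact le_refl _
      · simp [abs_nonneg]
    refine ⟨y + w, ?_, ?_, ?_⟩
    · apply hrball
      rw [Metric.mem_ball, dist_eq_norm, add_sub_cancel_left]
      exact lt_of_le_of_lt hwle (lt_of_lt_of_le hdz (min_le_left _ _))
    · intro i hi
      show z' i = (y + w) i
      rw [PiLp.add_apply, hwapp, if_pos hi]
      have h5 := hzy i hi
      linarith
    · show t' < ⟪y + w, c⟫ / M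
      have hwc : ⟪w, c⟫ = 0 := by
        rw [inner_eq]
        apply Finset.sum_eq_zero
        intro i _
        by_cases hi : ε i = 0
        · rw [hcapp, hi]; simp
        · rw [hwapp, if_neg hi, zero_mul]
      rw [inner_add_left, hwc, add_zero]
      have h2 : t' - t < min r (⟪y, c⟫ / M - t) :=
        lt_of_le_of_lt (le_trans (le_abs_self _) (le_of_eq (Real.dist_eq t' t).symm)) hdt
      have h3 := min_le_right r (⟪y, c⟫ / M - t)
      linarith
  have hSconv : Convex ℝ S := by
    rintro ⟨z1, t1⟩ ⟨y1, hy1, hz1, ht1⟩ ⟨z2, t2⟩ ⟨y2, hy2, hz2, ht2⟩ a b ha hb hab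
    replace hz1 : ∀ i, ε i = 0 → z1 i = y1 i := hz1
    replace hz2 : ∀ i, ε i = 0 → z2 i = y2 i := hz2
    replace ht1 : t1 < ⟪y1, c⟫ / M := ht1
    replace ht2 : t2 < ⟪y2, c⟫ / M := ht2
    refine ⟨a • y1 + b • y2, hKconv.interior hy1 hy2 ha hb hab, ?_, ?_⟩
    · intro i hi
      show (a • z1 + b • z2) i = (a • y1 + b • y2) i
      rw [PiLp.add_apply, PiLp.add_apply, PiLp.smul_apply, PiLp.smul_apply,
        PiLp.smul_apply, PiLp.smul_apply, hz1 i hi, hz2 i hi]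
    · show a * t1 + b * t2 < ⟪a • y1 + b • y2, c⟫ / M
      have hrhs : ⟪a • y1 + b • y2, c⟫ / M = a * (⟪y1, c⟫ / M) + b * (⟪y2, c⟫ / M) := by
        rw [inner_add_left, real_inner_smul_left, real_inner_smul_left]
        ring
      rw [hrhs]
      rcases eq_or_lt_of_le ha with h0 | h0
      · have hb1 : b = 1 := by linarith
        rw [← h0, hb1]
        simpa using ht2
      · have hh1 : a * t1 < a * (⟪y1, c⟫ / M) := mul_lt_mul_of_pos_left ht1 h0
        have hh2 : b * t2 ≤ b * (⟪y2, c⟫ / M) := mul_le_mul_of_nonneg_left ht2.le hb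
        linarith
  have h01 : ((0 : EuclideanSpace ℝ (Fin n)), (1:ℝ)) ∉ S := by
    rintro ⟨y, hy, hzy, hlt⟩
    have hyS : y ∈ K ∩ {y | ∀ i, ε i = 0 → y i = 0} :=
      ⟨interior_subset hy, fun i hi => by rw [← hzy i hi]; rfl⟩
    have h1 : ⟪y, c⟫ ≤ M := isMaxOn_iff.mp hxmax y hyS
    have h2 : ⟪y, c⟫ / M ≤ 1 := by rw [div_le_one hMpos]; exact h1
    have hlt' : (1:ℝ) < ⟪y, c⟫ / M := hlt
    linarith
  obtain ⟨f, hf⟩ := geometric_hahn_banach_open_point hSconv hSopen h01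
  set g : EuclideanSpace ℝ (Fin n) →L[ℝ] ℝ :=
    f.comp (ContinuousLinearMap.inl ℝ (EuclideanSpace ℝ (Fin n)) ℝ) with hgdef
  have hgapp : ∀ z : EuclideanSpace ℝ (Fin n), g z = f (z, 0) := fun z => rfl
  set c₀ : ℝ := f ((0 : EuclideanSpace ℝ (Fin n)), (1:ℝ)) with hc₀def
  have hfS : ∀ p ∈ S, f p < c₀ := fun p hp => hf p hp
  have hsplit : ∀ (z : EuclideanSpace ℝ (Fin n)) (t : ℝ), f (z, t) = g z + t * c₀ := by
    intro z t
    have h1 : ((z, t) : EuclideanSpace ℝ (Fin n) × ℝ)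
        = (z, (0:ℝ)) + t • ((0 : EuclideanSpace ℝ (Fin n)), (1:ℝ)) := by
      ext <;> simp
    rw [h1, map_add, _root_.map_smul, smul_eq_mul, hgapp]
  have hmem0 : ∀ t : ℝ, t < 0 → ((0 : EuclideanSpace ℝ (Fin n)), t) ∈ S := by
    intro t ht
    refine ⟨0, h0int, fun i _ => rfl, ?_⟩
    show t < ⟪(0 : EuclideanSpace ℝ (Fin n)), c⟫ / M
    rw [inner_zero_left, zero_div]
    exact ht
  have hc₀pos : 0 < c₀ := by
    have h1 := hfS _ (hmem0 (-1) (by norm_num))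
    rw [hsplit] at h1
    rw [map_zero] at h1
    linarith
  set Pw : EuclideanSpace ℝ (Fin n) → EuclideanSpace ℝ (Fin n) :=
    fun y => (WithLp.toLp 2 fun i => if ε i = 0 then y i else 0) with hPwdef
  have hPwapp : ∀ y i, Pw y i = if ε i = 0 then y i else 0 := fun y i => rfl
  have hmain : ∀ y ∈ interior K, g (Pw y) + (⟪y, c⟫ / M) * c₀ ≤ c₀ := by
    intro y hy
    have hforall : ∀ t < ⟪y, c⟫ / M, t < (c₀ - g (Pw y)) / c₀ := by
      intro t ht
      have hmem : ((Pw y, t) : EuclideanSpace ℝ (Fin n) × ℝ) ∈ S :=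
        ⟨y, hy, fun i hi => by show Pw y i = y i; rw [hPwapp, if_pos hi], ht⟩
      have h1 := hfS _ hmem
      rw [hsplit] at h1
      rw [lt_div_iff₀ hc₀pos]
      linarith
    have h2 := le_of_forall_lt hforall
    rw [le_div_iff₀ hc₀pos] at h2
    linarith
  set hs : EuclideanSpace ℝ (Fin n) :=
    (WithLp.toLp 2
      fun i => if ε i = 0 then g (EuclideanSpace.single i (1:ℝ)) / c₀ else 0) with hhsdef
  have hhsapp : ∀ i, hs i = if ε i = 0 then g (EuclideanSpace.single i (1:ℝ)) / c₀ else 0 :=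
    fun i => rfl
  have hhsV : ∀ i, ε i ≠ 0 → hs i = 0 := fun i hi => by rw [hhsapp, if_neg hi]
  have hginner : ∀ y : EuclideanSpace ℝ (Fin n), g (Pw y) = ⟪y, hs⟫ * c₀ := by
    intro y
    conv_lhs => rw [decomp (Pw y)]
    rw [map_sum]
    simp only [_root_.map_smul, smul_eq_mul]
    rw [inner_eq, Finset.sum_mul]
    apply Finset.sum_congr rfl
    intro i _
    rw [hPwapp, hhsapp]
    by_cases hi : ε i = 0
    · rw [if_pos hi, if_pos hi]
      field_simp
    · rw [if_neg hi, if_neg hi]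
      simp
  set ξ : EuclideanSpace ℝ (Fin n) := M⁻¹ • c + hs with hξdef
  have hKineq : ∀ y ∈ K, ⟪y, ξ⟫ ≤ 1 := by
    apply hKext
    intro y hy
    have h1 := hmain y hy
    rw [hginner] at h1
    have h2 : ⟪y, hs⟫ + ⟪y, c⟫ / M ≤ 1 := by
      have h3 : (⟪y, hs⟫ + ⟪y, c⟫ / M) * c₀ ≤ 1 * c₀ := by
        ring_nf
        ring_nf at h1
        linarith
      exact le_of_mul_le_mul_right h3 hc₀pos
    rw [hξdef, inner_add_right, real_inner_smul_right]
    have h4 : M⁻¹ * ⟪y, c⟫ = ⟪y, c⟫ / M := by rw [div_eq_inv_mul]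
    linarith
  -- orthogonality facts
  have hchs : ⟪c, hs⟫ = 0 := by
    rw [inner_eq]
    apply Finset.sum_eq_zero
    intro i _
    by_cases hi : ε i = 0
    · rw [hcapp, hi]; simp
    · rw [hhsV i hi, mul_zero]
  have hhsc : ⟪hs, c⟫ = 0 := by rw [real_inner_comm]; exact hchs
  have hxhs : ⟪x, hs⟫ = 0 := by
    rw [inner_eq]
    apply Finset.sum_eq_zero
    intro i _
    by_cases hi : ε i = 0
    · rw [hxV i hi, zero_mul]
    · rw [hhsV i hi, mul_zero]
  have hxξ : ⟪x, ξ⟫ = 1 := by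
    rw [hξdef, inner_add_right, real_inner_smul_right, ← hMdef, hxhs, add_zero,
      inv_mul_cancel₀ hMpos.ne']
  have hξne : ξ ≠ 0 := by
    intro h0
    rw [h0, inner_zero_right] at hxξ
    norm_num at hxξ
  have hξn : 0 < ‖ξ‖ := norm_pos_iff.mpr hξne
  -- norm bound on hs
  have hhs_norm : ‖hs‖ ≤ 2 * δ := by
    by_cases hhs0 : hs = 0
    · rw [hhs0, norm_zero]; linarith
    · have hn0 : 0 < ‖hs‖ := norm_pos_iff.mpr hhs0
      have hyK : (1-δ) • c + ((1-δ)/‖hs‖) • hs ∈ K := by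
        apply hKlow
        have hmem : c + ((1/‖hs‖) • hs) ∈ cube n := by
          intro i
          rw [PiLp.add_apply, PiLp.smul_apply, smul_eq_mul, hcapp]
          by_cases hi : ε i = 0
          · rw [hi]
            simp only [SignType.coe_zero, zero_add]
            rw [abs_mul, abs_of_pos (by positivity : (0:ℝ) < 1/‖hs‖)]
            rw [div_mul_eq_mul_div, one_mul, div_le_one hn0]
            exact coord_abs_le_norm hs i
          · rw [hhsV i hi, mul_zero, add_zero]
            exact habs_le i
        have heq : (1-δ) • c + ((1-δ)/‖hs‖) • hs = (1-δ) • (c + (1/‖hs‖) • hs) := by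
          rw [smul_add, smul_smul]
          congr 2
          field_simp
        rw [heq]
        exact Set.smul_mem_smul_set hmem
      have hineq := hKineq _ hyK
      have hcalc : ⟪(1-δ) • c + ((1-δ)/‖hs‖) • hs, ξ⟫
          = (1-δ) * (M⁻¹ * (m:ℝ)) + ((1-δ)/‖hs‖) * ‖hs‖^2 := by
        rw [hξdef, inner_add_left, real_inner_smul_left, real_inner_smul_left,
          inner_add_right, inner_add_right, real_inner_smul_right, real_inner_smul_right,
          hcc, hchs, hhsc, real_inner_self_eq_norm_sq]
        ring
      rw [hcalc] at hineq
      have h5 : ((1-δ)/‖hs‖) * ‖hs‖^2 = (1-δ) * ‖hs‖ := by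
        field_simp
      rw [h5] at hineq
      have h6 : (1:ℝ) ≤ M⁻¹ * (m:ℝ) := by
        rw [← div_eq_inv_mul, le_div_iff₀ hMpos]
        linarith
      nlinarith [norm_nonneg hs]
  -- frontier membership of x
  have hxfr : x ∈ frontier K := by
    have : x ∈ closure K \ interior K := by
      refine ⟨subset_closure hxK, fun hxint => ?_⟩
      obtain ⟨r, hr0, hrball⟩ := Metric.isOpen_iff.mp isOpen_interior x hxint
      have hsd : (0:ℝ) < r / (2 * ‖ξ‖) := by positivity
      have hmem : x + (r / (2 * ‖ξ‖)) • ξ ∈ K := by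
        apply interior_subset
        apply hrball
        rw [Metric.mem_ball, dist_eq_norm, add_sub_cancel_left, norm_smul,
          Real.norm_eq_abs, abs_of_pos hsd]
        rw [div_mul_eq_mul_div, mul_comm]
        rw [div_lt_iff₀ (by positivity : (0:ℝ) < 2 * ‖ξ‖)]
        nlinarith
      have h7 := hKineq _ hmem
      rw [inner_add_left, hxξ, real_inner_smul_left, real_inner_self_eq_norm_sq] at h7
      nlinarith [mul_pos hsd (pow_pos hξn 2)]
    exact this
  -- frontier membership of ξ
  have hξpolar : ξ ∈ polarBody K := fun y hy => hKineq y hy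
  have hξfr : ξ ∈ frontier (polarBody K) := by
    have : ξ ∈ closure (polarBody K) \ interior (polarBody K) := by
      refine ⟨subset_closure hξpolar, fun hint => ?_⟩
      obtain ⟨r, hr0, hrball⟩ := Metric.isOpen_iff.mp isOpen_interior ξ hint
      have hsd : (0:ℝ) < r / (2 * ‖ξ‖) := by positivity
      have hmem : ξ + (r / (2 * ‖ξ‖)) • ξ ∈ polarBody K := by
        apply interior_subset
        apply hrball
        rw [Metric.mem_ball, dist_eq_norm, add_sub_cancel_left, norm_smul,
          Real.norm_eq_abs, abs_of_pos hsd]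
        rw [div_mul_eq_mul_div, mul_comm]
        rw [div_lt_iff₀ (by positivity : (0:ℝ) < 2 * ‖ξ‖)]
        nlinarith
      have h7 := hmem x hxK
      rw [inner_add_right, hxξ, real_inner_smul_right, hxξ, mul_one] at h7
      nlinarith [hsd]
    exact this
  -- assembly
  set α : ℝ := M / (m:ℝ) with hα
  have hαpos : 0 < α := div_pos hMpos hmpos
  have hαle1 : α ≤ 1 := by
    rw [hα, div_le_one hmpos]
    exact hMle
  have hαge : 1 - δ ≤ α := by
    rw [hα, le_div_iff₀ hmpos]
    linarith
  have hCge1 : (1:ℝ) ≤ ((n:ℝ)+2)^2 := by nlinarith [hn0]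
  refine ⟨x, hxfr, ξ, hξfr, α, hαpos, x - α • c, hs, ?_, ?_, hxξ, ?_, ?_, hhsV, ?_, ?_, ?_⟩
  · abel
  · rw [hcast, smul_smul, hξdef]
    congr 2
    rw [hα, inv_div]
    field_simp
  · intro i hi
    rw [PiLp.sub_apply, PiLp.smul_apply, smul_eq_mul, hxV i hi, hcapp, hi]
    simp
  · have hterm : ∀ i, (ε i : ℝ) * (x - α • c) i = x i * c i - α * (c i * c i) := by
      intro i
      rw [PiLp.sub_apply, PiLp.smul_apply, smul_eq_mul, hcapp]
      ring
    rw [Finset.sum_congr rfl (fun i _ => hterm i), Finset.sum_sub_distrib, ← Finset.mul_sum]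
    have h7 : ∑ i, x i * c i = M := by rw [hMdef, inner_eq]
    have h8 : ∑ i, c i * c i = (m:ℝ) := by rw [← inner_eq]; exact hcc
    rw [h7, h8, hα]
    field_simp
    ring
  · rw [abs_le]
    constructor <;> nlinarith
  · have hkey : ∀ i, ¬ ε i = 0 → 1 - (m:ℝ)*δ ≤ x i * c i := by
      intro i hi
      have hMsum : M = ∑ j, x j * c j := by rw [hMdef, inner_eq]
      have herase : ∑ j ∈ Finset.univ.erase i, x j * c j + x i * c i = ∑ j, x j * c j :=
        Finset.sum_erase_add _ _ (Finset.mem_univ i)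
      have htermle : ∀ j, x j * c j ≤ if ε j = 0 then (0:ℝ) else 1 := by
        intro j
        rw [hcapp]
        by_cases hj : ε j = 0
        · simp [hj]
        · simp only [hj, if_false]
          calc x j * (ε j : ℝ) ≤ |x j * (ε j : ℝ)| := le_abs_self _
            _ = |x j| * |(ε j : ℝ)| := abs_mul _ _
            _ ≤ 1 * 1 := mul_le_mul (hxcube j) (habs_le j) (abs_nonneg _) zero_le_one
            _ = 1 := one_mul 1
      have hbound : ∑ j ∈ Finset.univ.erase i, x j * c j ≤ (m:ℝ) - 1 := by
        have h9 : ∑ j ∈ Finset.univ.erase i, x j * c j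
            ≤ ∑ j ∈ Finset.univ.erase i, (if ε j = 0 then (0:ℝ) else 1) :=
          Finset.sum_le_sum fun j _ => htermle j
        have h10 : ∑ j ∈ Finset.univ.erase i, (if ε j = 0 then (0:ℝ) else 1)
            + (if ε i = 0 then (0:ℝ) else 1) = ∑ j, (if ε j = 0 then (0:ℝ) else 1) :=
          Finset.sum_erase_add _ _ (Finset.mem_univ i)
        rw [if_neg hi, hsum_ind] at h10
        linarith
      nlinarith [hMge]
    have hcoord : ∀ i, |(x - α • c) i| ≤ ((n:ℝ)+1)*δ := by
      intro i
      rw [PiLp.sub_apply, PiLp.smul_apply, smul_eq_mul]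
      by_cases hi : ε i = 0
      · rw [hxV i hi, hcapp, hi]
        simp only [SignType.coe_zero, mul_zero, zero_sub, abs_neg, abs_zero]
        positivity
      · have hk := hkey i hi
        have hxi := abs_le.mp (hxcube i)
        have hmδ : (m:ℝ)*δ ≤ (n:ℝ)*δ := by
          have hc9 : (m:ℝ) ≤ (n:ℝ) := by exact_mod_cast hmlen
          nlinarith
        have hkc : 1 - (m:ℝ)*δ ≤ x i * (ε i : ℝ) := by rw [← hcapp]; exact hk
        have hs1 : (ε i : ℝ) = 1 ∨ (ε i : ℝ) = -1 := by
          cases h : ε i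
          · exact absurd h hi
          · exact Or.inr rfl
          · exact Or.inl rfl
        rw [hcapp, abs_le]
        rcases hs1 with e1 | e1 <;> rw [e1] at hkc ⊢ <;>
          constructor <;> nlinarith [hn0]
    have h11 := norm_le_of_coord (x - α • c) (((n:ℝ)+1)*δ) (by positivity) hcoord
    have h12 : Real.sqrt n ≤ (n:ℝ)+1 := by
      rw [show ((n:ℝ)+1) = Real.sqrt (((n:ℝ)+1)^2) from (Real.sqrt_sq (by positivity)).symm]
      apply Real.sqrt_le_sqrt
      nlinarith [hn0]
    calc ‖x - α • c‖ ≤ Real.sqrt n * (((n:ℝ)+1)*δ) := h11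
      _ ≤ ((n:ℝ)+1) * (((n:ℝ)+1)*δ) :=
          mul_le_mul_of_nonneg_right h12 (by positivity)
      _ ≤ ((n:ℝ)+2)^2 * δ := by
          rw [← mul_assoc]
          exact mul_le_mul_of_nonneg_right (by nlinarith [hn0]) hδ0.le
  · calc ‖hs‖ ≤ 2*δ := hhs_norm
      _ ≤ ((n:ℝ)+2)^2 * δ :=
          mul_le_mul_of_nonneg_right (by nlinarith [hn0]) hδ0.le
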